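/- arXiv:1401.3660 — 3 statements merged into one kernel-verified Lean document; each statement's English description precedes it below -/
import Mathlib

section
/- For every real ρ > 0 and ε with 0 ≤ ε < 1, the series Σ_{u=1}^∞ (ρ^u e^{−ρ}/u!) · [ 1 · ( 2u(1−ε)ε^(u−1)(1 − u(1−ε)ε^(u−1)) + u(1−ε)²ε^(2(u−1)) ) + 2 · u(u−1)(1−ε)²ε^(2(u−1)) ] converges and equals 2ρ(1−ε)e^{−ρ(1−ε)} − ρ(1−ε)²e^{−ρ(1−ε²)}. (This is the closed-form uplink throughput of Slotted Aloha with two receivers.) -/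
lemma real_exp_hasSum (x : ℝ) : HasSum (fun n : ℕ => x ^ n / n.factorial) (Real.exp x) := by
  have h := NormedSpace.exp_series_hasSum_exp' (𝕂 := ℝ) x
  rw [Real.exp_eq_exp_ℝ]
  simpa [smul_eq_mul, div_eq_inv_mul] using h

/-- Closed-form uplink throughput of Slotted Aloha with two receivers:
`Σ_{u≥1} Pr{U=u} · (1·Pr{C=1|u} + 2·Pr{C=2|u}) = 2ρ(1-ε)e^{-ρ(1-ε)} - ρ(1-ε)²e^{-ρ(1-ε²)}`.
(The `u = 0` term is zero due to the factors `u`.) -/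
theorem slotted_aloha_two_receiver_throughput
    (ρ ε : ℝ) (hρ : 0 < ρ) (hε0 : 0 ≤ ε) (hε1 : ε < 1) :
    HasSum
      (fun u : ℕ =>
        ρ ^ u * Real.exp (-ρ) / (Nat.factorial u) *
          (1 * (2 * (u : ℝ) * (1 - ε) * ε ^ (u - 1) *
                  (1 - (u : ℝ) * (1 - ε) * ε ^ (u - 1)) +
                (u : ℝ) * (1 - ε) ^ 2 * ε ^ (2 * (u - 1))) +
           2 * ((u : ℝ) * ((u : ℝ) - 1) * (1 - ε) ^ 2 * ε ^ (2 * (u - 1)))))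
      (2 * ρ * (1 - ε) * Real.exp (-(ρ * (1 - ε))) -
        ρ * (1 - ε) ^ 2 * Real.exp (-(ρ * (1 - ε ^ 2)))) := by
  set f : ℕ → ℝ := fun u =>
        ρ ^ u * Real.exp (-ρ) / (Nat.factorial u) *
          (1 * (2 * (u : ℝ) * (1 - ε) * ε ^ (u - 1) *
                  (1 - (u : ℝ) * (1 - ε) * ε ^ (u - 1)) +
                (u : ℝ) * (1 - ε) ^ 2 * ε ^ (2 * (u - 1))) +
           2 * ((u : ℝ) * ((u : ℝ) - 1) * (1 - ε) ^ 2 * ε ^ (2 * (u - 1)))) with hf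
  have h1 : HasSum (fun n : ℕ => (2 * (1 - ε) * ρ * Real.exp (-ρ)) * ((ρ * ε) ^ n / n.factorial))
      (2 * (1 - ε) * ρ * Real.exp (-ρ) * Real.exp (ρ * ε)) :=
    (real_exp_hasSum (ρ * ε)).mul_left _
  have h2 : HasSum
      (fun n : ℕ => ((1 - ε) ^ 2 * ρ * Real.exp (-ρ)) * ((ρ * ε ^ 2) ^ n / n.factorial))
      ((1 - ε) ^ 2 * ρ * Real.exp (-ρ) * Real.exp (ρ * ε ^ 2)) :=
    (real_exp_hasSum (ρ * ε ^ 2)).mul_left _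
  have heq : (fun n : ℕ => f (n + 1))
      = fun n : ℕ => (2 * (1 - ε) * ρ * Real.exp (-ρ)) * ((ρ * ε) ^ n / n.factorial)
          - ((1 - ε) ^ 2 * ρ * Real.exp (-ρ)) * ((ρ * ε ^ 2) ^ n / n.factorial) := by
    funext n
    have hnf : ((n.factorial : ℝ)) ≠ 0 := Nat.cast_ne_zero.mpr n.factorial_ne_zero
    have hn1 : ((n : ℝ) + 1) ≠ 0 := by positivity
    simp only [hf, Nat.add_sub_cancel, Nat.factorial_succ]
    push_cast
    field_simp
    ring
  have key := heq ▸ (h1.sub h2)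
  have h0 := (hasSum_nat_add_iff (f := f) 1).mp key
  have hf0 : ∑ i ∈ Finset.range 1, f i = 0 := by simp [hf]
  rw [hf0, add_zero] at h0
  have e1 : Real.exp (-(ρ * (1 - ε))) = Real.exp (-ρ) * Real.exp (ρ * ε) := by
    rw [← Real.exp_add]; ring_nf
  have e2 : Real.exp (-(ρ * (1 - ε ^ 2))) = Real.exp (-ρ) * Real.exp (ρ * ε ^ 2) := by
    rw [← Real.exp_add]; ring_nf
  rw [e1, e2]
  convert h0 using 1
  · rfl
  ring
end

section
/- For every integer K ≥ 1, every real ρ > 0, and every ε with 0 ≤ ε < 1, Σ_{u=1}^∞ (ρ^u e^{−ρ}/u!) · Σ_{k=1}^K (−1)^(k−1) · C(K,k) · u · ((1−ε)ε^(u−1))^k = Σ_{k=1}^K (−1)^(k−1) · C(K,k) · ρ(1−ε)^k e^{−ρ(1−ε^k)}, where C(K,k) is the binomial coefficient. (Proposition 1: the uplink throughput of Slotted Aloha with K receivers equals Σ_{k=1}^K (−1)^(k−1) C(K,k) ρ(1−ε)^k e^{−ρ(1−ε^k)}.) -/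
lemma aux_hasSum (ρ ε : ℝ) (k : ℕ) (hk : 1 ≤ k) :
    HasSum
      (fun u : ℕ =>
        ρ ^ u * Real.exp (-ρ) / (Nat.factorial u) *
          ((u : ℝ) * ((1 - ε) * ε ^ (u - 1)) ^ k))
      (ρ * (1 - ε) ^ k * Real.exp (-(ρ * (1 - ε ^ k)))) := by
  have h := (NormedSpace.expSeries_div_hasSum_exp (ρ * ε ^ k)).mul_left
      (Real.exp (-ρ) * ρ * (1 - ε) ^ k)
  have hexp : NormedSpace.exp (ρ * ε ^ k) = Real.exp (ρ * ε ^ k) := by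
    rw [Real.exp_eq_exp_ℝ]
  rw [hexp] at h
  have hval : Real.exp (-ρ) * ρ * (1 - ε) ^ k * Real.exp (ρ * ε ^ k)
      = ρ * (1 - ε) ^ k * Real.exp (-(ρ * (1 - ε ^ k))) := by
    have he : Real.exp (-ρ) * Real.exp (ρ * ε ^ k) = Real.exp (-(ρ * (1 - ε ^ k))) := by
      rw [← Real.exp_add]; congr 1; ring
    linear_combination ρ * (1 - ε) ^ k * he
  rw [hval] at h
  have heq : ∀ n : ℕ,
      ρ ^ (n + 1) * Real.exp (-ρ) / (Nat.factorial (n + 1)) *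
          (((n + 1 : ℕ) : ℝ) * ((1 - ε) * ε ^ ((n + 1) - 1)) ^ k)
      = Real.exp (-ρ) * ρ * (1 - ε) ^ k * ((ρ * ε ^ k) ^ n / n.factorial) := by
    intro n
    have hfac : ((Nat.factorial (n + 1) : ℝ)) = (n + 1) * n.factorial := by
      rw [Nat.factorial_succ]; push_cast; ring
    have hne : ((n : ℝ) + 1) ≠ 0 := by positivity
    have hne' : (n.factorial : ℝ) ≠ 0 := by exact_mod_cast n.factorial_ne_zero
    rw [Nat.add_sub_cancel, mul_pow (1 - ε), ← pow_mul, mul_pow ρ (ε ^ k), ← pow_mul,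
      mul_comm n k]
    push_cast [hfac]
    field_simp
    ring
  have h2 : HasSum
      (fun n : ℕ => ρ ^ (n + 1) * Real.exp (-ρ) / (Nat.factorial (n + 1)) *
          (((n + 1 : ℕ) : ℝ) * ((1 - ε) * ε ^ ((n + 1) - 1)) ^ k))
      (ρ * (1 - ε) ^ k * Real.exp (-(ρ * (1 - ε ^ k)))) := by
    exact h.congr_fun heq
  have h3 := (hasSum_nat_add_iff (f := fun u : ℕ =>
      ρ ^ u * Real.exp (-ρ) / (Nat.factorial u) *
        ((u : ℝ) * ((1 - ε) * ε ^ (u - 1)) ^ k)) 1).mp h2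
  simpa using h3

/-- Proposition 1: the uplink throughput of Slotted Aloha with `K` receivers.
The Poisson average of the conditional expected number of collected packets
(given by inclusion–exclusion) equals
`Σ_{k=1}^K (-1)^(k-1) C(K,k) ρ(1-ε)^k e^{-ρ(1-ε^k)}`. -/
theorem slotted_aloha_K_receiver_throughput
    (K : ℕ) (hK : 1 ≤ K) (ρ ε : ℝ) (hρ : 0 < ρ) (hε0 : 0 ≤ ε) (hε1 : ε < 1) :
    HasSum
      (fun u : ℕ =>
        ρ ^ u * Real.exp (-ρ) / (Nat.factorial u) *
          ∑ k ∈ Finset.Icc 1 K,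
            (-1 : ℝ) ^ (k - 1) * (K.choose k) * ((u : ℝ) * ((1 - ε) * ε ^ (u - 1)) ^ k))
      (∑ k ∈ Finset.Icc 1 K,
        (-1 : ℝ) ^ (k - 1) * (K.choose k) * (ρ * (1 - ε) ^ k * Real.exp (-(ρ * (1 - ε ^ k))))) := by
  have h : ∀ k ∈ Finset.Icc 1 K, HasSum
      (fun u : ℕ => (-1 : ℝ) ^ (k - 1) * (K.choose k) *
        (ρ ^ u * Real.exp (-ρ) / (Nat.factorial u) *
          ((u : ℝ) * ((1 - ε) * ε ^ (u - 1)) ^ k)))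
      ((-1 : ℝ) ^ (k - 1) * (K.choose k) *
        (ρ * (1 - ε) ^ k * Real.exp (-(ρ * (1 - ε ^ k))))) := by
    intro k hkm
    exact (aux_hasSum ρ ε k (Finset.mem_Icc.mp hkm).1).mul_left _
  have h2 := hasSum_sum h
  refine h2.congr_fun fun u => ?_
  rw [Finset.mul_sum]
  exact Finset.sum_congr rfl fun k _ => by ring
end

section
/- For every integer K ≥ 1, every real ρ > 0, and every ε with 0 ≤ ε < 1, the series Σ_{i=0}^∞ (ρ^i e^{−ρ}/i!) · (1 − (1−ε)ε^i)^K converges and equals Σ_{k=0}^K (−1)^k · C(K,k) · (1−ε)^k · e^{−ρ(1−ε^k)}. (Closed form for the packet loss probability ζ_K with K receivers.) -/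
/-- Closed form for the packet loss probability `ζ_K` with `K` receivers:
`Σ_{i≥0} (ρ^i e^{-ρ}/i!) (1-(1-ε)ε^i)^K = Σ_{k=0}^K (-1)^k C(K,k) (1-ε)^k e^{-ρ(1-ε^k)}`. -/
theorem slotted_aloha_packet_loss_probability
    (K : ℕ) (hK : 1 ≤ K) (ρ ε : ℝ) (hρ : 0 < ρ) (hε0 : 0 ≤ ε) (hε1 : ε < 1) :
    HasSum
      (fun i : ℕ =>
        ρ ^ i * Real.exp (-ρ) / (Nat.factorial i) * (1 - (1 - ε) * ε ^ i) ^ K)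
      (∑ k ∈ Finset.range (K + 1),
        (-1 : ℝ) ^ k * (K.choose k) * (1 - ε) ^ k * Real.exp (-(ρ * (1 - ε ^ k)))) := by
  have key : ∀ i : ℕ,
      ρ ^ i * Real.exp (-ρ) / (Nat.factorial i) * (1 - (1 - ε) * ε ^ i) ^ K
      = ∑ k ∈ Finset.range (K + 1),
          ((-1 : ℝ) ^ k * (K.choose k) * (1 - ε) ^ k * Real.exp (-ρ)) *
            ((ρ * ε ^ k) ^ i / i.factorial) := by
    intro i
    have h1 : (1 - (1 - ε) * ε ^ i) ^ K
        = ∑ k ∈ Finset.range (K + 1),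
            (-1 : ℝ) ^ k * (K.choose k) * ((1 - ε) * ε ^ i) ^ k := by
      rw [sub_eq_add_neg, add_comm, add_pow]
      refine Finset.sum_congr rfl fun k _ => ?_
      rw [one_pow, neg_pow]
      ring
    rw [h1, Finset.mul_sum]
    refine Finset.sum_congr rfl fun k _ => ?_
    rw [mul_pow, mul_pow, ← pow_mul, ← pow_mul, Nat.mul_comm i k]
    field_simp
  have hterm : ∀ k ∈ Finset.range (K + 1),
      HasSum (fun i : ℕ =>
          ((-1 : ℝ) ^ k * (K.choose k) * (1 - ε) ^ k * Real.exp (-ρ)) *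
            ((ρ * ε ^ k) ^ i / i.factorial))
        ((-1 : ℝ) ^ k * (K.choose k) * (1 - ε) ^ k * Real.exp (-(ρ * (1 - ε ^ k)))) := by
    intro k _
    have h := (real_exp_hasSum (ρ * ε ^ k)).mul_left
      ((-1 : ℝ) ^ k * (K.choose k) * (1 - ε) ^ k * Real.exp (-ρ))
    have : (-1 : ℝ) ^ k * (K.choose k) * (1 - ε) ^ k * Real.exp (-ρ) *
        Real.exp (ρ * ε ^ k)
        = (-1 : ℝ) ^ k * (K.choose k) * (1 - ε) ^ k * Real.exp (-(ρ * (1 - ε ^ k))) := by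
      rw [mul_assoc, ← Real.exp_add]
      ring_nf
    rwa [this] at h
  have := hasSum_sum hterm
  simpa only [← key] using this
end
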